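/- Suppose μ : (0,∞) → (0,∞) is decreasing and satisfies: (i) μ(t) ≤ C₁ μ(t+1) for all t > 1, and (ii) for each M > 0 there is C₂ > 0 with μ(t) ≤ C₂ μ(2t) for all t ∈ (0,M). Define j(r) = ∫₀^∞ (4πt)^{−d/2} e^{−r²/(4t)} μ(t) dt (assumed finite). Then for every M > 0 there is C₃ > 0 such that j(r) ≤ C₃ j(2r) for all r ∈ (0,M). -/

import Mathlib

open Real MeasureTheory

theorem stmt_13 (d : ℕ) (hd : 1 ≤ d) (μ : ℝ → ℝ)
    (hμpos : ∀ t > 0, 0 < μ t) (hμmono : AntitoneOn μ (Set.Ioi 0))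
    (C₁ : ℝ) (hC₁ : 0 < C₁) (hdbl1 : ∀ t > 1, μ t ≤ C₁ * μ (t + 1))
    (hdbl2 : ∀ M > 0, ∃ C₂ > (0 : ℝ), ∀ t ∈ Set.Ioo (0 : ℝ) M, μ t ≤ C₂ * μ (2 * t))
    (j : ℝ → ℝ)
    (hj : ∀ r > 0, j r = ∫ t in Set.Ioi (0 : ℝ),
      (4 * Real.pi * t) ^ (-(d : ℝ) / 2) * Real.exp (-r ^ 2 / (4 * t)) * μ t)
    (hfin : ∀ r > 0, MeasureTheory.IntegrableOn
      (fun t => (4 * Real.pi * t) ^ (-(d : ℝ) / 2) * Real.exp (-r ^ 2 / (4 * t)) * μ t)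
      (Set.Ioi 0)) :
    ∀ M > 0, ∃ C₃ > (0 : ℝ), ∀ r ∈ Set.Ioo (0 : ℝ) M, j r ≤ C₃ * j (2 * r) := by
  intro M hM
  obtain ⟨Ca, hCa, hCa'⟩ := hdbl2 1 one_pos
  obtain ⟨Cb, hCb, hCb'⟩ := hdbl2 2 two_pos
  refine ⟨Ca * Cb * (4 : ℝ) ^ ((d : ℝ) / 2 - 1) + Real.exp (M ^ 2), by positivity, ?_⟩
  rintro r ⟨hr0, hrM⟩
  have h2r : (0 : ℝ) < 2 * r := by linarith
  set g : ℝ → ℝ := fun t =>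
    (4 * Real.pi * t) ^ (-(d : ℝ) / 2) * Real.exp (-r ^ 2 / (4 * t)) * μ t with hgdef
  set G : ℝ → ℝ := fun t =>
    (4 * Real.pi * t) ^ (-(d : ℝ) / 2) * Real.exp (-(2 * r) ^ 2 / (4 * t)) * μ t with hGdef
  have hgint : IntegrableOn g (Set.Ioi 0) := hfin r hr0
  have hGint : IntegrableOn G (Set.Ioi 0) := hfin (2 * r) h2r
  have hjr : j r = ∫ t in Set.Ioi (0 : ℝ), g t := hj r hr0
  have hj2r : j (2 * r) = ∫ t in Set.Ioi (0 : ℝ), G t := hj (2 * r) h2r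
  -- nonnegativity
  have hgnn : ∀ t > (0 : ℝ), 0 ≤ g t := by
    intro t ht
    have h1 : (0 : ℝ) ≤ (4 * Real.pi * t) ^ (-(d : ℝ) / 2) := by
      apply Real.rpow_nonneg
      have := Real.pi_pos
      positivity
    have h2 : (0 : ℝ) ≤ Real.exp (-r ^ 2 / (4 * t)) := (Real.exp_pos _).le
    have h3 : (0 : ℝ) ≤ μ t := (hμpos t ht).le
    simp only [hgdef]
    positivity
  have hGnn : ∀ t > (0 : ℝ), 0 ≤ G t := by
    intro t ht
    have h1 : (0 : ℝ) ≤ (4 * Real.pi * t) ^ (-(d : ℝ) / 2) := by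
      apply Real.rpow_nonneg
      have := Real.pi_pos
      positivity
    have h3 : (0 : ℝ) ≤ μ t := (hμpos t ht).le
    simp only [hGdef]
    positivity
  -- the substituted function h
  set h : ℝ → ℝ := fun s => (4 : ℝ) ^ ((d : ℝ) / 2) * G (4 * s) with hhdef
  have hfour : (0 : ℝ) < 4 := by norm_num
  have hhint : IntegrableOn h (Set.Ioi 0) := by
    have : IntegrableOn (fun s => G (4 * s)) (Set.Ioi 0) := by
      rw [integrableOn_Ioi_comp_mul_left_iff G 0 hfour, mul_zero]
      exact hGint
    exact this.const_mul _
  have hhnn : ∀ s > (0 : ℝ), 0 ≤ h s := by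
    intro s hs
    have := hGnn (4 * s) (by linarith)
    have h4 : (0 : ℝ) ≤ (4 : ℝ) ^ ((d : ℝ) / 2) := (Real.rpow_pos_of_pos hfour _).le
    exact mul_nonneg h4 this
  -- pointwise formula for h on positive reals
  have hh_eq : ∀ s > (0 : ℝ), h s =
      (4 * Real.pi * s) ^ (-(d : ℝ) / 2) * Real.exp (-r ^ 2 / (4 * s)) * μ (4 * s) := by
    intro s hs
    have hπ := Real.pi_pos
    have hb : (0 : ℝ) ≤ 4 * Real.pi * s := by positivity
    have e1 : 4 * Real.pi * (4 * s) = 4 * (4 * Real.pi * s) := by ring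
    have e2 : (4 * (4 * Real.pi * s)) ^ (-(d : ℝ) / 2)
        = (4 : ℝ) ^ (-(d : ℝ) / 2) * (4 * Real.pi * s) ^ (-(d : ℝ) / 2) :=
      Real.mul_rpow (by norm_num) hb
    have e3 : -(2 * r) ^ 2 / (4 * (4 * s)) = -r ^ 2 / (4 * s) := by
      rw [show -(2 * r) ^ 2 = 4 * -r ^ 2 by ring]
      exact mul_div_mul_left _ _ (by norm_num)
    have e4 : (4 : ℝ) ^ ((d : ℝ) / 2) * (4 : ℝ) ^ (-(d : ℝ) / 2) = 1 := by
      rw [← Real.rpow_add hfour, show (d : ℝ) / 2 + -(d : ℝ) / 2 = 0 by ring, Real.rpow_zero]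
    simp only [hhdef, hGdef]
    rw [e1, e2, e3]
    linear_combination ((4 * Real.pi * s) ^ (-(d : ℝ) / 2) * Real.exp (-r ^ 2 / (4 * s))
      * μ (4 * s)) * e4
  -- integral of h in terms of j (2r)
  have hInth : ∫ s in Set.Ioi (0 : ℝ), h s = (4 : ℝ) ^ ((d : ℝ) / 2 - 1) * j (2 * r) := by
    have := integral_comp_mul_left_Ioi G 0 hfour
    rw [mul_zero] at this
    simp only [hhdef]
    rw [MeasureTheory.integral_const_mul, this, smul_eq_mul, hj2r]
    rw [Real.rpow_sub hfour, Real.rpow_one]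
    ring
  -- split the integral of g
  have hsub1 : Set.Ioo (0 : ℝ) 1 ⊆ Set.Ioi 0 := Set.Ioo_subset_Ioi_self
  have hsub2 : Set.Ici (1 : ℝ) ⊆ Set.Ioi 0 := fun x hx => Set.mem_Ioi.mpr (lt_of_lt_of_le one_pos (Set.mem_Ici.mp hx))
  have hsplit : ∫ t in Set.Ioi (0 : ℝ), g t
      = (∫ t in Set.Ioo (0 : ℝ) 1, g t) + ∫ t in Set.Ici (1 : ℝ), g t := by
    rw [← MeasureTheory.setIntegral_union
      ((Set.Iio_disjoint_Ici le_rfl).mono_left Set.Ioo_subset_Iio_self)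
      measurableSet_Ici (hgint.mono_set hsub1) (hgint.mono_set hsub2),
      Set.Ioo_union_Ici_eq_Ioi one_pos]
  -- bound on (0,1)
  have hbound1 : (∫ t in Set.Ioo (0 : ℝ) 1, g t) ≤ ∫ t in Set.Ioo (0 : ℝ) 1, Ca * Cb * h t := by
    apply MeasureTheory.setIntegral_mono_on (hgint.mono_set hsub1)
      ((hhint.mono_set hsub1).const_mul _) measurableSet_Ioo
    rintro s ⟨hs0, hs1⟩
    have hμ1 : μ s ≤ Ca * μ (2 * s) := hCa' s ⟨hs0, hs1⟩
    have hμ2 : μ (2 * s) ≤ Cb * μ (2 * (2 * s)) := hCb' (2 * s) ⟨by linarith, by linarith⟩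
    have h4s : 2 * (2 * s) = 4 * s := by ring
    rw [h4s] at hμ2
    have hμ3 : μ s ≤ Ca * Cb * μ (4 * s) := by
      calc μ s ≤ Ca * μ (2 * s) := hμ1
        _ ≤ Ca * (Cb * μ (4 * s)) := by
            exact mul_le_mul_of_nonneg_left hμ2 hCa.le
        _ = Ca * Cb * μ (4 * s) := by ring
    have hA : (0 : ℝ) ≤ (4 * Real.pi * s) ^ (-(d : ℝ) / 2) * Real.exp (-r ^ 2 / (4 * s)) := by
      have := Real.pi_pos
      have : (0 : ℝ) ≤ (4 * Real.pi * s) ^ (-(d : ℝ) / 2) := by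
        apply Real.rpow_nonneg; positivity
      positivity
    rw [hh_eq s hs0]
    simp only [hgdef]
    calc (4 * Real.pi * s) ^ (-(d : ℝ) / 2) * Real.exp (-r ^ 2 / (4 * s)) * μ s
        ≤ (4 * Real.pi * s) ^ (-(d : ℝ) / 2) * Real.exp (-r ^ 2 / (4 * s))
          * (Ca * Cb * μ (4 * s)) := by
          exact mul_le_mul_of_nonneg_left hμ3 hA
      _ = Ca * Cb * ((4 * Real.pi * s) ^ (-(d : ℝ) / 2) * Real.exp (-r ^ 2 / (4 * s))
          * μ (4 * s)) := by ring
  -- bound on [1, ∞)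
  have hbound2 : (∫ t in Set.Ici (1 : ℝ), g t)
      ≤ ∫ t in Set.Ici (1 : ℝ), Real.exp (M ^ 2) * G t := by
    apply MeasureTheory.setIntegral_mono_on (hgint.mono_set hsub2)
      ((hGint.mono_set hsub2).const_mul _) measurableSet_Ici
    intro t ht
    have ht1 : (1 : ℝ) ≤ t := ht
    have ht0 : (0 : ℝ) < t := lt_of_lt_of_le one_pos ht1
    have hexp : Real.exp (-r ^ 2 / (4 * t))
        ≤ Real.exp (M ^ 2) * Real.exp (-(2 * r) ^ 2 / (4 * t)) := by
      rw [← Real.exp_add, Real.exp_le_exp]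
      have h4t : (0 : ℝ) < 4 * t := by linarith
      have key : -r ^ 2 / (4 * t) - (M ^ 2 + -(2 * r) ^ 2 / (4 * t)) = 3 * r ^ 2 / (4 * t) - M ^ 2 := by
        field_simp
        ring
      have hle : 3 * r ^ 2 / (4 * t) ≤ M ^ 2 := by
        rw [div_le_iff₀ h4t]
        nlinarith [mul_le_mul hrM.le hrM.le hr0.le hM.le,
          mul_nonneg (mul_pos hM hM).le (by linarith : (0:ℝ) ≤ t - 1)]
      linarith
    have hB : (0 : ℝ) ≤ (4 * Real.pi * t) ^ (-(d : ℝ) / 2) := by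
      have := Real.pi_pos
      apply Real.rpow_nonneg; positivity
    have hμt : (0 : ℝ) ≤ μ t := (hμpos t ht0).le
    simp only [hgdef, hGdef]
    calc (4 * Real.pi * t) ^ (-(d : ℝ) / 2) * Real.exp (-r ^ 2 / (4 * t)) * μ t
        ≤ (4 * Real.pi * t) ^ (-(d : ℝ) / 2)
          * (Real.exp (M ^ 2) * Real.exp (-(2 * r) ^ 2 / (4 * t))) * μ t := by
          apply mul_le_mul_of_nonneg_right _ hμt
          exact mul_le_mul_of_nonneg_left hexp hB
      _ = Real.exp (M ^ 2) * ((4 * Real.pi * t) ^ (-(d : ℝ) / 2)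
          * Real.exp (-(2 * r) ^ 2 / (4 * t)) * μ t) := by ring
  -- extend the pieces to the full half-line
  have hmono1 : (∫ t in Set.Ioo (0 : ℝ) 1, h t) ≤ ∫ t in Set.Ioi (0 : ℝ), h t := by
    apply MeasureTheory.setIntegral_mono_set hhint
    · filter_upwards [MeasureTheory.self_mem_ae_restrict measurableSet_Ioi] with t ht
      exact hhnn t ht
    · exact Filter.Eventually.of_forall (fun x hx => hsub1 hx)
  have hmono2 : (∫ t in Set.Ici (1 : ℝ), G t) ≤ ∫ t in Set.Ioi (0 : ℝ), G t := by
    apply MeasureTheory.setIntegral_mono_set hGint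
    · filter_upwards [MeasureTheory.self_mem_ae_restrict measurableSet_Ioi] with t ht
      exact hGnn t ht
    · exact Filter.Eventually.of_forall (fun x hx => hsub2 hx)
  -- combine
  have hj2nn : 0 ≤ j (2 * r) := by
    rw [hj2r]
    apply MeasureTheory.setIntegral_nonneg measurableSet_Ioi
    intro t ht; exact hGnn t ht
  calc j r = (∫ t in Set.Ioo (0 : ℝ) 1, g t) + ∫ t in Set.Ici (1 : ℝ), g t := by
        rw [hjr, hsplit]
    _ ≤ (∫ t in Set.Ioo (0 : ℝ) 1, Ca * Cb * h t)
        + ∫ t in Set.Ici (1 : ℝ), Real.exp (M ^ 2) * G t := add_le_add hbound1 hbound2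
    _ = Ca * Cb * (∫ t in Set.Ioo (0 : ℝ) 1, h t)
        + Real.exp (M ^ 2) * ∫ t in Set.Ici (1 : ℝ), G t := by
        simp only [MeasureTheory.integral_const_mul]
    _ ≤ Ca * Cb * (∫ t in Set.Ioi (0 : ℝ), h t)
        + Real.exp (M ^ 2) * ∫ t in Set.Ioi (0 : ℝ), G t := by
        apply add_le_add
        · exact mul_le_mul_of_nonneg_left hmono1 (by positivity)
        · exact mul_le_mul_of_nonneg_left hmono2 (Real.exp_pos _).le
    _ = Ca * Cb * ((4 : ℝ) ^ ((d : ℝ) / 2 - 1) * j (2 * r))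
        + Real.exp (M ^ 2) * j (2 * r) := by rw [hInth, hj2r]
    _ = (Ca * Cb * (4 : ℝ) ^ ((d : ℝ) / 2 - 1) + Real.exp (M ^ 2)) * j (2 * r) := by ring
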